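/- Let n_1 ≤ … ≤ n_k be positive integers with k ≥ 2 and n_k > 1, let m ≥ 1, let F = mK_{n_1,…,n_k} and ℓ = m(n_1+…+n_k), and let G' = G^m_{ℓ−1,k}. Then for every injection f : V(F) → V(G') realizing F as an induced subgraph of G', there do not exist two vertices v, w of F lying in different connected components of F such that f(v) and f(w) have the same third coordinate (lie in the same part of G') but different second coordinates (lie in different doles of G'). -/

import Mathlib

/-- Disjoint union of `m` copies of a graph `A`. -/
def manyCopies {α : Type*} (m : ℕ) (A : SimpleGraph α) : SimpleGraph (Fin m × α) where
  Adj p q := p.1 = q.1 ∧ A.Adj p.2 q.2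
  symm := ⟨by intro p q h; exact ⟨h.1.symm, h.2.symm⟩⟩
  loopless := ⟨by intro p h; exact A.loopless.irrefl _ h.2⟩

/-- The almost multipartite graph `G^m_{ℓ,k}`, on triples `(i, j, h)` where `i` is the
class, `j` the dole and `h` the part: two vertices are adjacent iff they are in the same
part with different classes and doles, or have the same class and different parts. -/
def almostMultipartite (ℓ k m : ℕ) : SimpleGraph (Fin ℓ × Fin k × Fin m) where
  Adj p q := (p.2.2 = q.2.2 ∧ p.1 ≠ q.1 ∧ p.2.1 ≠ q.2.1) ∨ (p.1 = q.1 ∧ p.2.2 ≠ q.2.2)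
  symm := ⟨by
    rintro p q (⟨h1, h2, h3⟩ | ⟨h1, h2⟩)
    · exact Or.inl ⟨h1.symm, h2.symm, h3.symm⟩
    · exact Or.inr ⟨h1.symm, h2.symm⟩⟩
  loopless := ⟨by rintro p (⟨_, h, _⟩ | ⟨_, h⟩) <;> exact h rfl⟩

/-- with `k ≥ 2`, `n_k > 1`, `F = mK_{n₁,…,n_k}` and `G' = G^m_{ℓ−1,k}`
(`ℓ = m(n₁+…+n_k)`), for every realization of `F` as an induced subgraph of `G'`
there is no pair of vertices of `F` from different connected components whose images
lie in the same part of `G'` but in different doles of `G'`. -/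
theorem no_crossing_pair (k m : ℕ) (hk : 2 ≤ k) (hm : 1 ≤ m)
    (n : Fin k → ℕ) (hpos : ∀ i, 0 < n i) (hmono : Monotone n)
    (hnk : 1 < n ⟨k - 1, by omega⟩)
    (f : (manyCopies m (SimpleGraph.completeMultipartiteGraph fun i => Fin (n i))) ↪g
        almostMultipartite (m * ∑ i, n i - 1) k m) :
    ¬∃ v w : Fin m × Σ i : Fin k, Fin (n i),
        (manyCopies m
            (SimpleGraph.completeMultipartiteGraph fun i => Fin (n i))).connectedComponentMk v ≠
          (manyCopies m
            (SimpleGraph.completeMultipartiteGraph fun i => Fin (n i))).connectedComponentMk w ∧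
        (f v).2.2 = (f w).2.2 ∧ (f v).2.1 ≠ (f w).2.1 := by
  have hFadj : ∀ x y : Fin m × Σ i : Fin k, Fin (n i),
      (manyCopies m (SimpleGraph.completeMultipartiteGraph fun i => Fin (n i))).Adj x y ↔
        (x.1 = y.1 ∧ x.2.1 ≠ y.2.1) := fun _ _ => Iff.rfl
  have hGadj : ∀ p q : Fin (m * ∑ i, n i - 1) × Fin k × Fin m,
      (almostMultipartite (m * ∑ i, n i - 1) k m).Adj p q ↔
        ((p.2.2 = q.2.2 ∧ p.1 ≠ q.1 ∧ p.2.1 ≠ q.2.1) ∨ (p.1 = q.1 ∧ p.2.2 ≠ q.2.2)) :=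
    fun _ _ => Iff.rfl
  have hmap : ∀ x y,
      (almostMultipartite (m * ∑ i, n i - 1) k m).Adj (f x) (f y) ↔
        (manyCopies m (SimpleGraph.completeMultipartiteGraph fun i => Fin (n i))).Adj x y :=
    fun x y => f.map_adj_iff
  -- a second dole index always exists
  have hex : ∀ j : Fin k, ∃ i : Fin k, i ≠ j := by
    intro j
    exact Fintype.exists_ne_of_one_lt_card (by simpa using by omega : 1 < Fintype.card (Fin k)) j
  -- same copy implies same connected component
  have hreach : ∀ x y : Fin m × Σ i : Fin k, Fin (n i), x.1 = y.1 →
      (manyCopies m (SimpleGraph.completeMultipartiteGraph fun i => Fin (n i))).Reachable x y := by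
    intro x y hxy
    by_cases hd : x.2.1 = y.2.1
    · obtain ⟨i', hi'⟩ := hex x.2.1
      have h1 := (hFadj x (x.1, ⟨i', ⟨0, hpos i'⟩⟩)).2 ⟨rfl, fun h => hi' h.symm⟩
      have h2 := (hFadj (x.1, ⟨i', ⟨0, hpos i'⟩⟩) y).2 ⟨hxy, by
        show i' ≠ y.2.1; rw [← hd]; exact hi'⟩
      exact h1.reachable.trans h2.reachable
    · exact ((hFadj x y).2 ⟨hxy, hd⟩).reachable
  rintro ⟨v, w, hcomp, hpp, hdd⟩
  have hc : v.1 ≠ w.1 := fun h =>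
    hcomp (SimpleGraph.ConnectedComponent.sound (hreach v w h))
  -- non-adjacency across copies
  have hnadj : ∀ x y : Fin m × Σ i : Fin k, Fin (n i), x.1 ≠ y.1 →
      ¬ (almostMultipartite (m * ∑ i, n i - 1) k m).Adj (f x) (f y) := by
    intro x y hxy h
    exact hxy (((hFadj x y).1 ((hmap x y).1 h)).1)
  -- same class
  have hclass : (f v).1 = (f w).1 := by
    by_contra h
    exact hnadj v w hc ((hGadj _ _).2 (Or.inl ⟨hpp, h, hdd⟩))
  -- key lemma
  have key : ∀ x y u : Fin m × Σ i : Fin k, Fin (n i), x.1 ≠ y.1 →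
      (f x).2.2 = (f y).2.2 → (f x).1 = (f y).1 → (f x).2.1 ≠ (f y).2.1 →
      (manyCopies m (SimpleGraph.completeMultipartiteGraph fun i => Fin (n i))).Adj u x →
      (f u).2.2 = (f x).2.2 ∧ (f u).2.1 = (f y).2.1 ∧ (f u).1 ≠ (f x).1 := by
    intro x y u hxy hpxy hcxy hdxy hux
    have hucopy : u.1 = x.1 := ((hFadj u x).1 hux).1
    have hnadjuy := hnadj u y (fun h => hxy (hucopy ▸ h))
    rcases (hGadj _ _).1 ((hmap u x).2 hux) with ⟨hp, hcl, hdl⟩ | ⟨hcl, hp⟩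
    · refine ⟨hp, ?_, hcl⟩
      by_contra hd2
      exact hnadjuy ((hGadj _ _).2 (Or.inl ⟨hp.trans hpxy, fun h => hcl (h.trans hcxy.symm), hd2⟩))
    · exact absurd ((hGadj _ _).2 (Or.inr ⟨hcl.trans hcxy, fun h => hp (h.trans hpxy.symm)⟩))
        hnadjuy
  -- neighbours of v and neighbours of w have the same class
  have key2 : ∀ u u' : Fin m × Σ i : Fin k, Fin (n i),
      (manyCopies m (SimpleGraph.completeMultipartiteGraph fun i => Fin (n i))).Adj u v →
      (manyCopies m (SimpleGraph.completeMultipartiteGraph fun i => Fin (n i))).Adj u' w →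
      (f u).1 = (f u').1 := by
    intro u u' hu hu'
    obtain ⟨hup, hud, huc⟩ := key v w u hc hpp hclass hdd hu
    obtain ⟨hup', hud', huc'⟩ := key w v u' (Ne.symm hc) hpp.symm hclass.symm (Ne.symm hdd) hu'
    have h1 : u.1 ≠ u'.1 := by
      rw [((hFadj u v).1 hu).1, ((hFadj u' w).1 hu').1]; exact hc
    by_contra h
    refine hnadj u u' h1 ((hGadj _ _).2 (Or.inl ⟨?_, h, ?_⟩))
    · rw [hup, hup', hpp]
    · rw [hud, hud']; exact Ne.symm hdd
  -- a neighbour u' of w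
  obtain ⟨iw', hiw'⟩ := hex w.2.1
  have hadju'w : (manyCopies m (SimpleGraph.completeMultipartiteGraph fun i => Fin (n i))).Adj
      (w.1, ⟨iw', ⟨0, hpos iw'⟩⟩) w := (hFadj _ _).2 ⟨rfl, hiw'⟩
  obtain ⟨hu'p, hu'd, hu'c⟩ :=
    key w v (w.1, ⟨iw', ⟨0, hpos iw'⟩⟩) (Ne.symm hc) hpp.symm hclass.symm (Ne.symm hdd) hadju'w
  by_cases hnv : 2 ≤ n v.2.1
  · -- Case B: a sibling v2 of v in the same dole
    obtain ⟨jv2, hjvne⟩ : ∃ j : Fin (n v.2.1), j ≠ v.2.2 :=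
      Fintype.exists_ne_of_one_lt_card (by simpa using by omega : 1 < Fintype.card (Fin (n v.2.1)))
        v.2.2
    obtain ⟨cv, iv, jv⟩ := v
    simp only at jv2 hjvne
    have hv2ne : ((cv, ⟨iv, jv2⟩) : Fin m × Σ i : Fin k, Fin (n i)) ≠ (cv, ⟨iv, jv⟩) := by
      intro h
      rw [Prod.ext_iff] at h
      exact hjvne (eq_of_heq (Sigma.mk.inj_iff.1 h.2).2)
    -- a neighbour u of v
    obtain ⟨iu, hiu⟩ := hex iv
    have hadjuv : (manyCopies m (SimpleGraph.completeMultipartiteGraph fun i => Fin (n i))).Adj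
        (cv, ⟨iu, ⟨0, hpos iu⟩⟩) ((cv, ⟨iv, jv⟩) : Fin m × Σ i : Fin k, Fin (n i)) :=
      (hFadj _ _).2 ⟨rfl, hiu⟩
    obtain ⟨hup, hud, huc⟩ := key (cv, ⟨iv, jv⟩) w (cv, ⟨iu, ⟨0, hpos iu⟩⟩) hc hpp hclass hdd hadjuv
    have huu' : (f (cv, ⟨iu, ⟨0, hpos iu⟩⟩)).1 = (f (w.1, ⟨iw', ⟨0, hpos iw'⟩⟩)).1 :=
      key2 _ _ hadjuv hadju'w
    have hadjv2u : (manyCopies m (SimpleGraph.completeMultipartiteGraph fun i => Fin (n i))).Adj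
        ((cv, ⟨iv, jv2⟩) : Fin m × Σ i : Fin k, Fin (n i)) (cv, ⟨iu, ⟨0, hpos iu⟩⟩) :=
      (hFadj _ _).2 ⟨rfl, fun h => hiu h.symm⟩
    have hcvw : ((cv, ⟨iv, jv2⟩) : Fin m × Σ i : Fin k, Fin (n i)).1 ≠ w.1 := hc
    have hcvu' : ((cv, ⟨iv, jv2⟩) : Fin m × Σ i : Fin k, Fin (n i)).1 ≠
        ((w.1, ⟨iw', ⟨0, hpos iw'⟩⟩) : Fin m × Σ i : Fin k, Fin (n i)).1 := hc
    have hnadjv2w := hnadj _ _ hcvw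
    have hnadjv2u' := hnadj _ _ hcvu'
    rcases (hGadj _ _).1 ((hmap _ _).2 hadjv2u) with ⟨hp, hcl, hdl⟩ | ⟨hcl, hp⟩
    · have hv2p : (f (cv, ⟨iv, jv2⟩)).2.2 = (f w).2.2 := hp.trans (hup.trans hpp)
      have hv2c : (f (cv, ⟨iv, jv2⟩)).1 = (f w).1 := by
        by_contra h
        refine hnadjv2w ((hGadj _ _).2 (Or.inl ⟨hv2p, h, fun hh => hdl (hh.trans hud.symm)⟩))
      have hv2d : (f (cv, ⟨iv, jv2⟩)).2.1 = (f (w.1, ⟨iw', ⟨0, hpos iw'⟩⟩)).2.1 := by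
        by_contra h
        refine hnadjv2u' ((hGadj _ _).2 (Or.inl ⟨hv2p.trans hu'p.symm, ?_, h⟩))
        rw [hv2c, ← hclass]
        exact fun hh => huc (huu' ▸ hh.symm)
      have heq : f (cv, ⟨iv, jv2⟩) = f (cv, ⟨iv, jv⟩) := by
        refine Prod.ext (hv2c.trans hclass.symm) (Prod.ext ?_ (hv2p.trans hpp.symm))
        exact hv2d.trans hu'd
      exact hv2ne (f.injective heq)
    · refine hnadjv2u' ((hGadj _ _).2 (Or.inr ⟨hcl.trans huu', ?_⟩))
      rw [hu'p, ← hpp, ← hup]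
      exact hp
  · -- Case A: two neighbours of v in the largest dole
    have hiv : v.2.1 ≠ ⟨k - 1, by omega⟩ := by
      intro h; rw [h] at hnv; exact hnv hnk
    have hadj1 : (manyCopies m (SimpleGraph.completeMultipartiteGraph fun i => Fin (n i))).Adj
        (v.1, ⟨⟨k - 1, by omega⟩, ⟨0, by exact hpos _⟩⟩) v :=
      (hFadj _ _).2 ⟨rfl, fun h => hiv h.symm⟩
    have hadj2 : (manyCopies m (SimpleGraph.completeMultipartiteGraph fun i => Fin (n i))).Adj
        (v.1, ⟨⟨k - 1, by omega⟩, ⟨1, by exact hnk⟩⟩) v :=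
      (hFadj _ _).2 ⟨rfl, fun h => hiv h.symm⟩
    obtain ⟨h1p, h1d, _⟩ := key v w _ hc hpp hclass hdd hadj1
    obtain ⟨h2p, h2d, _⟩ := key v w _ hc hpp hclass hdd hadj2
    have h1c := key2 _ _ hadj1 hadju'w
    have h2c := key2 _ _ hadj2 hadju'w
    have heq : f (v.1, ⟨⟨k - 1, by omega⟩, ⟨0, by exact hpos _⟩⟩) =
        f (v.1, ⟨⟨k - 1, by omega⟩, ⟨1, by exact hnk⟩⟩) :=
      Prod.ext (h1c.trans h2c.symm) (Prod.ext (h1d.trans h2d.symm) (h1p.trans h2p.symm))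
    have h12 := f.injective heq
    rw [Prod.ext_iff] at h12
    have := eq_of_heq (Sigma.mk.inj_iff.1 h12.2).2
    exact absurd (congrArg Fin.val this) (by simp)
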